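/- Both marginals of the SWITCH output are independent of the input: for S(ρ) = ½(|0⟩⟨0|+|1⟩⟨1|) ⊗ I/d + ½(|0⟩⟨1|+|1⟩⟨0|) ⊗ ρ/d², the partial trace over the control is I/d, and the partial trace over the system is the fixed control state ½(|0⟩⟨0|+|1⟩⟨1|) + (1/(2d²))(|0⟩⟨1|+|1⟩⟨0|), for every density matrix ρ. -/

import Mathlib

open Matrix Kronecker BigOperators

/-- The output of the quantum SWITCH of two completely depolarizing channels
with control in `|+⟩`, written system ⊗ control. -/
noncomputable def switchOut (d : ℕ) (ρ : Matrix (Fin d) (Fin d) ℂ) :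
    Matrix (Fin d × Fin 2) (Fin d × Fin 2) ℂ :=
  (2 * (d : ℂ))⁻¹ • ((1 : Matrix (Fin d) (Fin d) ℂ) ⊗ₖ
      (Matrix.single (0 : Fin 2) 0 (1 : ℂ) + Matrix.single (1 : Fin 2) 1 (1 : ℂ)))
    + (2 * (d : ℂ) ^ 2)⁻¹ • (ρ ⊗ₖ
      (Matrix.single (0 : Fin 2) 1 (1 : ℂ) + Matrix.single (1 : Fin 2) 0 (1 : ℂ)))


theorem switchOut_marginals_constant (d : ℕ) (hd : 1 ≤ d)
    (ρ : Matrix (Fin d) (Fin d) ℂ) (hρ : ρ.IsHermitian) (htr : ρ.trace = 1) :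
    (fun a b : Fin d => ∑ i : Fin 2, switchOut d ρ (a, i) (b, i))
      = (d : ℂ)⁻¹ • (1 : Matrix (Fin d) (Fin d) ℂ) ∧
    (fun i j : Fin 2 => ∑ a : Fin d, switchOut d ρ (a, i) (a, j))
      = (1 / 2 : ℂ) • (Matrix.single (0 : Fin 2) 0 (1 : ℂ)
            + Matrix.single (1 : Fin 2) 1 (1 : ℂ))
        + (1 / (2 * (d : ℂ) ^ 2)) • (Matrix.single (0 : Fin 2) 1 (1 : ℂ)
            + Matrix.single (1 : Fin 2) 0 (1 : ℂ)) := by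
  have hd0 : (d : ℂ) ≠ 0 := Nat.cast_ne_zero.mpr (by omega)
  constructor
  · funext a b
    simp [switchOut, Matrix.add_apply, Matrix.smul_apply, kroneckerMap_apply,
      Fin.sum_univ_two, Matrix.single, Matrix.one_apply]
    split_ifs
    · field_simp; ring
    · ring
  · funext i j
    have htr' : ∑ a : Fin d, ρ a a = 1 := htr
    simp only [switchOut, Matrix.add_apply, Matrix.smul_apply, kroneckerMap_apply,
      Matrix.one_apply, smul_eq_mul, Finset.sum_add_distrib, if_true, one_mul]
    rw [Finset.sum_const, Finset.card_univ, Fintype.card_fin, nsmul_eq_mul]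
    have h2 : ∑ x : Fin d, (2 * (d:ℂ) ^ 2)⁻¹ *
        (ρ x x * (single 0 1 1 i j + single 1 0 1 i j))
        = (2 * (d:ℂ) ^ 2)⁻¹ * (single 0 1 1 i j + single 1 0 1 i j) := by
      rw [← Finset.mul_sum, ← Finset.sum_mul, htr', one_mul]
    rw [h2]
    change _ = (1 / 2 : ℂ) * (single (0 : Fin 2) 0 (1 : ℂ) i j + single (1 : Fin 2) 1 (1 : ℂ) i j)
      + (1 / (2 * (d : ℂ) ^ 2)) * (single (0 : Fin 2) 1 (1 : ℂ) i j + single (1 : Fin 2) 0 (1 : ℂ) i j)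
    field_simp
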